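/- Let h ≥ 2 be an integer and let H be a finite-index subgroup of the genus-h surface group S_h. Then every finite subset of H that generates H (i.e., whose closure as a subgroup of S_h equals H) has cardinality at least 2h. -/

import Mathlib

open scoped commutatorElement

/-- The surface relator `[a₁,b₁][a₂,b₂]⋯[a_g,b_g]` in the free group on `2g` generators. -/
def surfaceRelator (g : ℕ) : FreeGroup (Fin (2 * g)) :=
  (List.ofFn (fun i : Fin g =>
    ⁅FreeGroup.of (⟨2 * i.val, by have := i.isLt; omega⟩ : Fin (2 * g)),
     FreeGroup.of (⟨2 * i.val + 1, by have := i.isLt; omega⟩ : Fin (2 * g))⁆)).prod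

/-- The genus-`g` surface group `S_g = ⟨a₁,b₁,…,a_g,b_g ∣ [a₁,b₁]⋯[a_g,b_g]⟩`. -/
abbrev SurfaceGroup (g : ℕ) : Type :=
  PresentedGroup ({surfaceRelator g} : Set (FreeGroup (Fin (2 * g))))

/-- Any finite generating set of a finite-index subgroup of the genus-`h`
surface group (`h ≥ 2`) has cardinality at least `2h`. -/
theorem stmt4 (h : ℕ) (hh : 2 ≤ h) (H : Subgroup (SurfaceGroup h)) (hH : H.FiniteIndex)
    (S : Finset (SurfaceGroup h)) (hgen : Subgroup.closure (S : Set (SurfaceGroup h)) = H) :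
    2 * h ≤ S.card := by
  classical
  -- abelianization map to ℤ^{2h}
  set A := Multiplicative (Fin (2 * h) → ℤ) with hA
  have hrel : ∀ r ∈ ({surfaceRelator h} : Set (FreeGroup (Fin (2 * h)))),
      FreeGroup.lift (fun i => Multiplicative.ofAdd (Pi.single i 1) : Fin (2 * h) → A) r = 1 := by
    intro r hr
    rw [Set.mem_singleton_iff] at hr; subst hr
    unfold surfaceRelator
    rw [map_list_prod]
    apply List.prod_eq_one
    intro x hx
    simp only [List.map_ofFn, List.mem_ofFn] at hx
    obtain ⟨i, rfl⟩ := hx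
    simp only [Function.comp_apply]
    rw [map_commutatorElement]
    exact commutatorElement_eq_one_iff_commute.mpr (Commute.all _ _)
  set ψ : SurfaceGroup h →* A := PresentedGroup.toGroup hrel with hψ
  have hψof : ∀ i, ψ (PresentedGroup.of i) = Multiplicative.ofAdd (Pi.single i 1) :=
    fun i => PresentedGroup.toGroup.of hrel
  have hsurj : Function.Surjective ψ := by
    rw [← MonoidHom.range_eq_top]
    rw [MonoidHom.range_eq_map, ← PresentedGroup.closure_range_of, MonoidHom.map_closure]
    rw [eq_top_iff]
    intro a _
    have ha : a = ∏ i : Fin (2 * h),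
        (Multiplicative.ofAdd (Pi.single i 1 : Fin (2 * h) → ℤ)) ^ (Multiplicative.toAdd a i) := by
      apply Multiplicative.toAdd.injective
      rw [toAdd_prod]
      simp only [toAdd_zpow, toAdd_ofAdd]
      rw [← Finset.univ_sum_single (Multiplicative.toAdd a)]
      congr 1
      ext i j
      simp [Pi.single_apply, mul_comm]
    rw [ha]
    apply Subgroup.prod_mem
    intro i _
    apply Subgroup.zpow_mem
    apply Subgroup.subset_closure
    exact ⟨PresentedGroup.of i, ⟨i, rfl⟩, hψof i⟩
  -- image of H
  set K := H.map ψ with hK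
  have hKind : K.index ≠ 0 := by
    intro h0
    apply hH.index_ne_zero
    exact Nat.eq_zero_of_zero_dvd (h0 ▸ Subgroup.index_map_dvd H hsurj)
  have hKgen : Subgroup.closure (ψ '' (S : Set (SurfaceGroup h))) = K := by
    rw [← MonoidHom.map_closure, hgen]
  -- pass to ℚ
  set L : A → (Fin (2 * h) → ℚ) := fun k i => ((Multiplicative.toAdd k i : ℤ) : ℚ) with hL
  set T : Finset (Fin (2 * h) → ℚ) := S.image (fun s => L (ψ s)) with hT
  have hmemspan : ∀ k ∈ K, L k ∈ Submodule.span ℚ (T : Set (Fin (2 * h) → ℚ)) := by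
    intro k hk
    rw [← hKgen] at hk
    induction hk using Subgroup.closure_induction with
    | mem x hx =>
      apply Submodule.subset_span
      obtain ⟨s, hs, rfl⟩ := hx
      exact Finset.mem_coe.mpr (Finset.mem_image_of_mem _ hs)
    | one =>
      have : L 1 = 0 := by funext i; exact Int.cast_zero
      rw [this]; exact Submodule.zero_mem _
    | mul x y hx hy px py =>
      have : L (x * y) = L x + L y := by
        funext i; exact Int.cast_add (Multiplicative.toAdd x i) (Multiplicative.toAdd y i)
      rw [this]; exact Submodule.add_mem _ px py
    | inv x hx px =>
      have : L x⁻¹ = -L x := by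
        funext i; exact Int.cast_neg (Multiplicative.toAdd x i)
      rw [this]; exact Submodule.neg_mem _ px
  have hsingle : ∀ i : Fin (2 * h),
      (Pi.single i 1 : Fin (2 * h) → ℚ) ∈ Submodule.span ℚ (T : Set (Fin (2 * h) → ℚ)) := by
    intro i
    set m := K.index with hm
    have hmem : (Multiplicative.ofAdd (Pi.single i 1 : Fin (2 * h) → ℤ)) ^ m ∈ K :=
      K.pow_index_mem _
    have hsp := hmemspan _ hmem
    have hval : L ((Multiplicative.ofAdd (Pi.single i 1 : Fin (2 * h) → ℤ)) ^ m)
        = (m : ℚ) • (Pi.single i 1 : Fin (2 * h) → ℚ) := by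
      funext j
      simp only [hL, toAdd_pow, toAdd_ofAdd, Pi.smul_apply, Pi.single_apply]
      push_cast
      split <;> simp
    rw [hval] at hsp
    have : (Pi.single i 1 : Fin (2 * h) → ℚ)
        = (m : ℚ)⁻¹ • (m : ℚ) • (Pi.single i 1 : Fin (2 * h) → ℚ) := by
      rw [smul_smul, inv_mul_cancel₀ (by exact_mod_cast hKind), one_smul]
    rw [this]
    exact Submodule.smul_mem _ _ hsp
  have hspan_top : Submodule.span ℚ (T : Set (Fin (2 * h) → ℚ)) = ⊤ := by
    rw [eq_top_iff, ← (Pi.basisFun ℚ (Fin (2 * h))).span_eq, Submodule.span_le]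
    rintro x ⟨i, rfl⟩
    rw [Pi.basisFun_apply]
    exact hsingle i
  have h1 : Module.finrank ℚ (Submodule.span ℚ (T : Set (Fin (2 * h) → ℚ))) ≤ T.card :=
    finrank_span_finset_le_card T
  rw [hspan_top] at h1
  have h2 : Module.finrank ℚ ((⊤ : Submodule ℚ (Fin (2 * h) → ℚ))) = 2 * h := by
    rw [finrank_top, Module.finrank_pi, Fintype.card_fin]
  rw [h2] at h1
  exact h1.trans (Finset.card_image_le)
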